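/- For the bilinear game f(x,y) = α x y, the CGD iteration map is a contraction of the Euclidean norm with factor (1+η²α²)^{−1/2} < 1, and this factor is strictly decreasing in η. Hence increasing the step size strictly improves the per-iteration convergence rate of CGD on bilinear games. -/
import Mathlib


/-- the CGD map on the bilinear game `f(x,y) = αxy` is a contraction of the
Euclidean norm with factor `(1+η²α²)^(-1/2) < 1`, strictly decreasing in `η`. -/
theorem stmt_8 (α : ℝ) (hα : α ≠ 0) :
    (∀ η : ℝ, 0 < η → ∀ x y : ℝ,
      Real.sqrt ((x - η * (1 + η ^ 2 * α ^ 2)⁻¹ * (α * y + η * α ^ 2 * x)) ^ 2 +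
          (y + η * (1 + η ^ 2 * α ^ 2)⁻¹ * (α * x - η * α ^ 2 * y)) ^ 2) =
        (1 + η ^ 2 * α ^ 2) ^ (-(1 / 2 : ℝ)) * Real.sqrt (x ^ 2 + y ^ 2)) ∧
    (∀ η : ℝ, 0 < η → (1 + η ^ 2 * α ^ 2) ^ (-(1 / 2 : ℝ)) < 1) ∧
    (∀ η₁ η₂ : ℝ, 0 < η₁ → η₁ < η₂ →
      (1 + η₂ ^ 2 * α ^ 2) ^ (-(1 / 2 : ℝ)) < (1 + η₁ ^ 2 * α ^ 2) ^ (-(1 / 2 : ℝ))) := by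
  have ha2 : 0 < α ^ 2 := by positivity
  refine ⟨?_, ?_, ?_⟩
  · intro η hη x y
    have hc : (0:ℝ) < 1 + η ^ 2 * α ^ 2 := by positivity
    have key : (x - η * (1 + η ^ 2 * α ^ 2)⁻¹ * (α * y + η * α ^ 2 * x)) ^ 2 +
          (y + η * (1 + η ^ 2 * α ^ 2)⁻¹ * (α * x - η * α ^ 2 * y)) ^ 2 =
        (1 + η ^ 2 * α ^ 2)⁻¹ * (x ^ 2 + y ^ 2) := by
      field_simp
      ring
    rw [key, Real.sqrt_mul (by positivity), Real.sqrt_inv,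
      Real.rpow_neg hc.le, Real.sqrt_eq_rpow]
  · intro η hη
    exact Real.rpow_lt_one_of_one_lt_of_neg (by nlinarith [mul_pos (mul_pos hη hη) ha2]) (by norm_num)
  · intro η₁ η₂ h1 h12
    exact Real.rpow_lt_rpow_of_neg (by nlinarith [mul_pos (mul_pos h1 h1) ha2]) (by nlinarith [mul_lt_mul_of_pos_right (by nlinarith : η₁^2 < η₂^2) ha2]) (by norm_num)
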